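/- (Average of log-Gaussian densities.) The matrix P := ∑_{z} f(z)·Σ(z)⁻¹ is positive definite; set Σ̄ := P⁻¹, m̄ := Σ̄ · ( ∑_{z} f(z)·Σ(z)⁻¹·m(z) ), and log ζ := ∑_{z} f(z)·log g(m̄ | z) + (1/2)·log det(2π·Σ̄). Then for every x ∈ ℝ^d, ∑_{z} f(z)·log g(x | z) = log ζ + log ḡ(x), where ḡ is the Gaussian density with mean m̄ and covariance Σ̄. -/

import Mathlib

open MeasureTheory Matrix
open scoped BigOperators

/-- The Gaussian density on `ℝ^d` with mean `m` and (positive definite) covariance `S`: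
`g(x) = det(2π·S)^{-1/2} · exp(−(1/2)·(x−m)ᵀ S⁻¹ (x−m))`. -/
noncomputable def gaussianDensity {d : ℕ} (m : Fin d → ℝ)
    (S : Matrix (Fin d) (Fin d) ℝ) (x : Fin d → ℝ) : ℝ :=
  ((2 * Real.pi) • S).det ^ (-(1 : ℝ) / 2) *
    Real.exp (-(1 / 2) * ((x - m) ⬝ᵥ S⁻¹.mulVec (x - m)))

private lemma my_sum_mulVec {d M : ℕ} (A : Fin M → Matrix (Fin d) (Fin d) ℝ) (x : Fin d → ℝ) :
    (∑ z, A z) *ᵥ x = ∑ z, A z *ᵥ x := by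
  induction' (Finset.univ : Finset (Fin M)) using Finset.induction with a s ha ih
  · simp [Matrix.zero_mulVec]
  · simp [Finset.sum_insert ha, Matrix.add_mulVec, ih]

private lemma my_dotProduct_sum {d M : ℕ} (w : Fin M → Fin d → ℝ) (x : Fin d → ℝ) :
    x ⬝ᵥ (∑ z, w z) = ∑ z, x ⬝ᵥ w z := by
  induction' (Finset.univ : Finset (Fin M)) using Finset.induction with a s ha ih
  · simp
  · simp [Finset.sum_insert ha, dotProduct_add, ih]

private lemma my_quad_expand {d : ℕ} (Q : Matrix (Fin d) (Fin d) ℝ) (hQ : Qᵀ = Q)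
    (a b : Fin d → ℝ) :
    (a - b) ⬝ᵥ Q *ᵥ (a - b)
      = a ⬝ᵥ Q *ᵥ a - 2 * (a ⬝ᵥ Q *ᵥ b) + b ⬝ᵥ Q *ᵥ b := by
  have hba : b ⬝ᵥ Q *ᵥ a = a ⬝ᵥ Q *ᵥ b := by
    rw [dotProduct_mulVec, ← Matrix.mulVec_transpose, hQ, dotProduct_comm]
  rw [Matrix.mulVec_sub, dotProduct_sub, sub_dotProduct, sub_dotProduct, hba]; ring

private lemma my_log_gaussianDensity {d : ℕ} {S : Matrix (Fin d) (Fin d) ℝ}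
    (hS : S.PosDef) (m x : Fin d → ℝ) :
    Real.log (gaussianDensity m S x)
      = (-(1:ℝ)/2) * Real.log (((2 * Real.pi) • S).det)
        - (1/2) * ((x - m) ⬝ᵥ S⁻¹ *ᵥ (x - m)) := by
  have hdet : (0:ℝ) < ((2 * Real.pi) • S).det := by
    rw [Matrix.det_smul]
    exact mul_pos (pow_pos (by positivity) _) hS.det_pos
  unfold gaussianDensity
  rw [Real.log_mul (Real.rpow_pos_of_pos hdet _).ne' (Real.exp_ne_zero _),
    Real.log_rpow hdet, Real.log_exp]
  ring

theorem average_log_gaussian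
    (d M : ℕ) (hM : 1 ≤ M)
    (f : Fin M → ℝ) (hf0 : ∀ z, 0 ≤ f z) (hf1 : (∑ z, f z) = 1)
    (m : Fin M → Fin d → ℝ)
    (S : Fin M → Matrix (Fin d) (Fin d) ℝ) (hS : ∀ z, (S z).PosDef) :
    let P : Matrix (Fin d) (Fin d) ℝ := ∑ z, f z • (S z)⁻¹
    let Sbar := P⁻¹
    let mbar := Sbar.mulVec (∑ z, f z • (S z)⁻¹.mulVec (m z))
    let logζ := (∑ z, f z * Real.log (gaussianDensity (m z) (S z) mbar))
      + (1 / 2) * Real.log (((2 * Real.pi) • Sbar).det)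
    P.PosDef ∧
      ∀ x : Fin d → ℝ,
        (∑ z, f z * Real.log (gaussianDensity (m z) (S z) x))
          = logζ + Real.log (gaussianDensity mbar Sbar x) := by
  intro P Sbar mbar logζ
  have hQ : ∀ z, ((S z)⁻¹).PosDef := fun z => (hS z).inv
  -- a z with positive weight
  have hz0 : ∃ z : Fin M, 0 < f z := by
    by_contra h
    push_neg at h
    have : (∑ z, f z) = 0 :=
      Finset.sum_eq_zero fun z _ => le_antisymm (h z) (hf0 z)
    rw [this] at hf1; norm_num at hf1
  -- dot products through P
  have hPx : ∀ v w : Fin d → ℝ, v ⬝ᵥ P *ᵥ w = ∑ z, f z * (v ⬝ᵥ (S z)⁻¹ *ᵥ w) := by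
    intro v w
    show v ⬝ᵥ (∑ z, f z • (S z)⁻¹) *ᵥ w = _
    rw [my_sum_mulVec, my_dotProduct_sum]
    refine Finset.sum_congr rfl fun z _ => ?_
    rw [Matrix.smul_mulVec, dotProduct_smul, smul_eq_mul]
  have hP : P.PosDef := by
    refine Matrix.PosDef.of_dotProduct_mulVec_pos ?_ ?_
    · show Pᴴ = P
      show (∑ z, f z • (S z)⁻¹)ᴴ = ∑ z, f z • (S z)⁻¹
      rw [Matrix.conjTranspose_sum]
      exact Finset.sum_congr rfl fun z _ => by
        rw [Matrix.conjTranspose_smul, (hQ z).isHermitian.eq, star_trivial]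
    · intro x hx
      have hsx : star x = x := by
        funext i; simp
      rw [hsx, hPx]
      obtain ⟨z0, hz0'⟩ := hz0
      refine Finset.sum_pos' (fun z _ => ?_) ⟨z0, Finset.mem_univ z0, ?_⟩
      · have h := (hQ z).posSemidef.dotProduct_mulVec_nonneg x
        rw [hsx] at h
        exact mul_nonneg (hf0 z) h
      · have h := (hQ z0).dotProduct_mulVec_pos hx
        rw [hsx] at h
        exact mul_pos hz0' h
  refine ⟨hP, ?_⟩
  have hPdet : IsUnit P.det := isUnit_iff_ne_zero.2 hP.det_pos.ne'
  have hSbar : Sbar.PosDef := hP.inv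
  have hSbarInv : Sbar⁻¹ = P := Matrix.nonsing_inv_nonsing_inv P hPdet
  have hPsym : Pᵀ = P := hP.isHermitian.eq
  -- P *ᵥ mbar = b
  set b : Fin d → ℝ := ∑ z, f z • (S z)⁻¹ *ᵥ m z with hb
  have hPmbar : P *ᵥ mbar = b := by
    show P *ᵥ (P⁻¹ *ᵥ b) = b
    rw [Matrix.mulVec_mulVec, Matrix.mul_nonsing_inv P hPdet, Matrix.one_mulVec]
  have hvb : ∀ v : Fin d → ℝ, v ⬝ᵥ b = ∑ z, f z * (v ⬝ᵥ (S z)⁻¹ *ᵥ m z) := by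
    intro v
    rw [hb, my_dotProduct_sum]
    refine Finset.sum_congr rfl fun z _ => ?_
    rw [dotProduct_smul, smul_eq_mul]
  -- quadratic forms
  set q : Fin M → (Fin d → ℝ) → ℝ :=
    fun z y => (y - m z) ⬝ᵥ (S z)⁻¹ *ᵥ (y - m z) with hq
  have hexpand : ∀ y : Fin d → ℝ,
      ∑ z, f z * q z y
        = y ⬝ᵥ P *ᵥ y - 2 * (y ⬝ᵥ b) + ∑ z, f z * (m z ⬝ᵥ (S z)⁻¹ *ᵥ m z) := by
    intro y
    rw [hPx, hvb, Finset.mul_sum, ← Finset.sum_sub_distrib, ← Finset.sum_add_distrib]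
    refine Finset.sum_congr rfl fun z _ => ?_
    simp only [hq]
    rw [my_quad_expand ((S z)⁻¹) (hQ z).isHermitian.eq (y) (m z)]
    ring
  have key : ∀ x : Fin d → ℝ,
      ∑ z, f z * q z x = (x - mbar) ⬝ᵥ P *ᵥ (x - mbar) + ∑ z, f z * q z mbar := by
    intro x
    have h1 : (x - mbar) ⬝ᵥ P *ᵥ (x - mbar)
        = x ⬝ᵥ P *ᵥ x - 2 * (x ⬝ᵥ P *ᵥ mbar) + mbar ⬝ᵥ P *ᵥ mbar :=
      my_quad_expand P hPsym x mbar
    have h2 : x ⬝ᵥ P *ᵥ mbar = x ⬝ᵥ b := by rw [hPmbar]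
    have h3 : mbar ⬝ᵥ P *ᵥ mbar = mbar ⬝ᵥ b := by rw [hPmbar]
    rw [hexpand x, hexpand mbar, h1, h2, h3]
    ring
  intro x
  -- rewrite all logs
  have hlog : ∀ (y : Fin d → ℝ) z, Real.log (gaussianDensity (m z) (S z) y)
      = (-(1:ℝ)/2) * Real.log (((2 * Real.pi) • S z).det) - (1/2) * q z y :=
    fun y z => my_log_gaussianDensity (hS z) (m z) y
  have hsplit : ∀ y : Fin d → ℝ,
      ∑ z, f z * Real.log (gaussianDensity (m z) (S z) y)
        = (∑ z, f z * ((-(1:ℝ)/2) * Real.log (((2 * Real.pi) • S z).det)))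
          - (1/2) * ∑ z, f z * q z y := by
    intro y
    rw [Finset.mul_sum, ← Finset.sum_sub_distrib]
    refine Finset.sum_congr rfl fun z _ => ?_
    rw [hlog y z]; ring
  have hlogbar : Real.log (gaussianDensity mbar Sbar x)
      = (-(1:ℝ)/2) * Real.log (((2 * Real.pi) • Sbar).det)
        - (1/2) * ((x - mbar) ⬝ᵥ P *ᵥ (x - mbar)) := by
    rw [my_log_gaussianDensity hSbar mbar x, hSbarInv]
  show _ = (∑ z, f z * Real.log (gaussianDensity (m z) (S z) mbar))
      + (1 / 2) * Real.log (((2 * Real.pi) • Sbar).det) + _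
  rw [hsplit x, hsplit mbar, hlogbar, key x]
  ring
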